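/- Let X be a random variable with mean zero and variance σ² > 0, having an absolutely continuous distribution with density p and finite entropy. Let 0 < κ < 1 and let p = κ·p_0 + (1 − κ)·p_1 be a quantile density decomposition of p, and let V_0, V_1 be random variables with densities p_0, p_1 and standard deviations σ_0, σ_1. Then σ_0 > σ·e^{−(D(X)+4)/κ} and σ_1 > σ·e^{−(D(X)+4)/(1−κ)}. -/

import Mathlib

open MeasureTheory Set

/-- `p` is a probability density on the real line. -/
def IsProbDensity (p : ℝ → ℝ) : Prop :=
  Measurable p ∧ (∀ x, 0 ≤ p x) ∧ (∫ x, p x = 1)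

/-- The entropic distance to normality `D(X) = h(Z) - h(X) = log (σ √(2πe)) + ∫ p log p`
for a random variable with density `p` and standard deviation `σ > 0`. -/
noncomputable def entDist (p : ℝ → ℝ) (σ : ℝ) : ℝ :=
  Real.log (σ * Real.sqrt (2 * Real.pi * Real.exp 1)) + ∫ x, p x * Real.log (p x)

/-- Maximum-entropy inequality: a density with variance `s²` has entropy at most
that of the Gaussian, `-∫ q log q ≤ log (s √(2πe))`. -/
lemma maxEnt (q : ℝ → ℝ) (a s : ℝ) (hs : 0 < s)
    (hmq : Measurable q) (h0 : ∀ x, 0 ≤ q x) (hqInt : Integrable q)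
    (hq1 : ∫ x, q x = 1)
    (hvInt : Integrable (fun x => (x - a) ^ 2 * q x))
    (hv : ∫ x, (x - a) ^ 2 * q x = s ^ 2)
    (hlInt : Integrable (fun x => q x * Real.log (q x))) :
    -(∫ x, q x * Real.log (q x)) ≤ Real.log (s * Real.sqrt (2 * Real.pi * Real.exp 1)) := by
  have hπ : (0:ℝ) < Real.pi := Real.pi_pos
  have hs2 : (0:ℝ) < 2 * Real.pi * s ^ 2 := by positivity
  set φ : ℝ → ℝ := fun x => (Real.sqrt (2 * Real.pi * s ^ 2))⁻¹ *
      Real.exp (-(x - a) ^ 2 / (2 * s ^ 2)) with hφdef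
  have hsq : Real.sqrt (2 * Real.pi * s ^ 2) > 0 := Real.sqrt_pos.mpr hs2
  have hφpos : ∀ x, 0 < φ x := fun x => by positivity
  -- φ is the gaussian pdf
  have hveq : ((s ^ 2).toNNReal : ℝ) = s ^ 2 := Real.coe_toNNReal _ (sq_nonneg s)
  have hφeq : φ = ProbabilityTheory.gaussianPDFReal a ((s ^ 2).toNNReal) := by
    funext x
    rw [ProbabilityTheory.gaussianPDFReal]
    rw [hveq]
  have hvne : (s ^ 2).toNNReal ≠ 0 := by
    simp only [ne_eq, Real.toNNReal_eq_zero, not_le]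
    positivity
  have hφInt : Integrable φ := hφeq ▸ ProbabilityTheory.integrable_gaussianPDFReal a _
  have hφ1 : ∫ x, φ x = 1 := by
    rw [hφeq]; exact ProbabilityTheory.integral_gaussianPDFReal_eq_one a hvne
  -- log φ
  have hlogφ : ∀ x, Real.log (φ x) =
      -Real.log (Real.sqrt (2 * Real.pi * s ^ 2)) - (x - a) ^ 2 / (2 * s ^ 2) := by
    intro x
    rw [hφdef]
    rw [Real.log_mul (by positivity) (Real.exp_ne_zero _), Real.log_inv, Real.log_exp]
    ring
  -- integrability of q log φ
  have hqlogφ_eq : (fun x => q x * Real.log (φ x)) =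
      fun x => (-Real.log (Real.sqrt (2 * Real.pi * s ^ 2))) * q x
        + (-(2 * s ^ 2)⁻¹) * ((x - a) ^ 2 * q x) := by
    funext x; rw [hlogφ x]; field_simp; ring
  have hqlogφInt : Integrable (fun x => q x * Real.log (φ x)) := by
    rw [hqlogφ_eq]
    exact (hqInt.const_mul _).add (hvInt.const_mul _)
  have hqlogφ : ∫ x, q x * Real.log (φ x) =
      -Real.log (Real.sqrt (2 * Real.pi * s ^ 2)) - 1 / 2 := by
    rw [hqlogφ_eq, integral_add ((hqInt.const_mul _)) (hvInt.const_mul _),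
      integral_const_mul, integral_const_mul, hq1, hv]
    field_simp
    ring
  -- pointwise Gibbs inequality
  have hpt : ∀ x, q x * Real.log (φ x) - q x * Real.log (q x) ≤ φ x - q x := by
    intro x
    rcases eq_or_lt_of_le (h0 x) with h | h
    · simp [← h]
      exact le_of_lt (hφpos x)
    · have hlog : Real.log (φ x / q x) ≤ φ x / q x - 1 :=
        Real.log_le_sub_one_of_pos (by positivity)
      rw [Real.log_div (ne_of_gt (hφpos x)) (ne_of_gt h)] at hlog
      have := mul_le_mul_of_nonneg_left hlog (le_of_lt h)
      calc q x * Real.log (φ x) - q x * Real.log (q x)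
          = q x * (Real.log (φ x) - Real.log (q x)) := by ring
        _ ≤ q x * (φ x / q x - 1) := this
        _ = φ x - q x := by field_simp
  have hint : ∫ x, (q x * Real.log (φ x) - q x * Real.log (q x)) ≤ ∫ x, (φ x - q x) := by
    apply integral_mono (hqlogφInt.sub hlInt) (hφInt.sub hqInt) hpt
  rw [integral_sub hqlogφInt hlInt, integral_sub hφInt hqInt, hφ1, hq1, hqlogφ] at hint
  -- rewrite the target log
  have hkey : Real.log (s * Real.sqrt (2 * Real.pi * Real.exp 1)) =
      Real.log (Real.sqrt (2 * Real.pi * s ^ 2)) + 1 / 2 := by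
    have h1 : Real.sqrt (2 * Real.pi * s ^ 2) = Real.sqrt (2 * Real.pi) * s := by
      rw [Real.sqrt_mul (by positivity), Real.sqrt_sq hs.le]
    have h2 : Real.sqrt (2 * Real.pi * Real.exp 1) =
        Real.sqrt (2 * Real.pi) * Real.sqrt (Real.exp 1) := Real.sqrt_mul (by positivity) _
    rw [h1, h2, Real.log_mul (ne_of_gt hs) (by positivity),
      Real.log_mul (by positivity) (by positivity),
      Real.log_mul (by positivity) (ne_of_gt hs), Real.log_sqrt (Real.exp_pos 1).le,
      Real.log_exp]
    ring
  rw [hkey]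
  linarith

/-- A density cannot have zero variance. -/
lemma posVar (q : ℝ → ℝ) (a s : ℝ) (h0 : ∀ x, 0 ≤ q x)
    (hq1 : ∫ x, q x = 1)
    (hvInt : Integrable (fun x => (x - a) ^ 2 * q x))
    (hv : ∫ x, (x - a) ^ 2 * q x = s ^ 2) (hs : 0 ≤ s) : 0 < s := by
  rcases hs.lt_or_eq with h | h
  · exact h
  exfalso
  have hzero : ∫ x, (x - a) ^ 2 * q x = 0 := by rw [hv, ← h]; ring
  have hnn : 0 ≤ fun x => (x - a) ^ 2 * q x :=
    fun x => mul_nonneg (sq_nonneg _) (h0 x)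
  have hae : (fun x => (x - a) ^ 2 * q x) =ᵐ[volume] 0 :=
    (integral_eq_zero_iff_of_nonneg hnn hvInt).mp hzero
  have hane : ∀ᵐ x : ℝ, x ≠ a := by
    rw [ae_iff]
    simpa using measure_singleton (α := ℝ) a
  have hq0 : q =ᵐ[volume] 0 := by
    filter_upwards [hae, hane] with x hx hxa
    have : (x - a) ^ 2 ≠ 0 := by
      intro hc; apply hxa; nlinarith [sq_nonneg (x - a)]
    simpa [this] using hx
  rw [integral_congr_ae hq0] at hq1
  simp at hq1

lemma comp (p q : ℝ → ℝ) (A : Set ℝ) (κ : ℝ) (hA : MeasurableSet A) (hκ : 0 < κ)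
    (hmp : Measurable p) (h0p : ∀ x, 0 ≤ p x) (hpInt : Integrable p)
    (hx2p : Integrable (fun x => x ^ 2 * p x))
    (hent : Integrable (fun x => p x * Real.log (p x)) volume)
    (hmass : ∫ x in A, p x = κ)
    (hq : ∀ x, q x = A.indicator p x / κ) :
    Measurable q ∧ (∀ x, 0 ≤ q x) ∧ Integrable q ∧ (∫ x, q x) = 1 ∧
    Integrable (fun x => x ^ 2 * q x) ∧ Integrable (fun x => x * q x) ∧
    Integrable (fun x => q x * Real.log (q x)) ∧
    (∫ x in A, p x * Real.log (p x)) = κ * ((∫ x, q x * Real.log (q x)) + Real.log κ) ∧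
    (∫ x, x ^ 2 * q x) = κ⁻¹ * ∫ x in A, x ^ 2 * p x := by
  have hκne : κ ≠ 0 := ne_of_gt hκ
  have hqe : q = fun x => A.indicator p x * κ⁻¹ := by
    funext x; rw [hq x, div_eq_mul_inv]
  have hmq : Measurable q := by
    rw [hqe]; exact ((hmp.indicator hA).mul_const _)
  have h0q : ∀ x, 0 ≤ q x := fun x => by
    rw [hq x]
    exact div_nonneg (indicator_nonneg (fun y _ => h0p y) x) hκ.le
  have hqInt : Integrable q := by
    rw [hqe]; exact (hpInt.indicator hA).mul_const _
  have hq1 : (∫ x, q x) = 1 := by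
    rw [hqe, integral_mul_const, integral_indicator hA, hmass, mul_inv_cancel₀ hκne]
  have hx2q_eq : (fun x => x ^ 2 * q x) =
      fun x => A.indicator (fun y => y ^ 2 * p y) x * κ⁻¹ := by
    funext x
    rw [hq x]
    by_cases hx : x ∈ A <;> simp [hx, indicator_of_mem, indicator_of_notMem, div_eq_mul_inv] <;> ring
  have hx2q : Integrable (fun x => x ^ 2 * q x) := by
    rw [hx2q_eq]; exact (hx2p.indicator hA).mul_const _
  have hx2qval : (∫ x, x ^ 2 * q x) = κ⁻¹ * ∫ x in A, x ^ 2 * p x := by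
    rw [hx2q_eq, integral_mul_const, integral_indicator hA, mul_comm]
  -- x * q integrable via |x| ≤ (1 + x²)/2
  have hxq : Integrable (fun x => x * q x) := by
    have hg : Integrable (fun x => (1 / 2) * (q x + x ^ 2 * q x)) :=
      (hqInt.add hx2q).const_mul _
    refine hg.mono' ((measurable_id.mul hmq).aestronglyMeasurable) ?_
    filter_upwards with x
    have h1 : |x| ≤ (1 + x ^ 2) / 2 := by nlinarith [sq_nonneg (|x| - 1), sq_abs x]
    have : ‖x * q x‖ = |x| * q x := by
      rw [Real.norm_eq_abs, abs_mul, abs_of_nonneg (h0q x)]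
    rw [this]
    have := mul_le_mul_of_nonneg_right h1 (h0q x)
    nlinarith [h0q x]
  -- entropy of q
  have hqlog_eq : (fun x => q x * Real.log (q x)) =
      fun x => A.indicator (fun y => p y * Real.log (p y)) x * κ⁻¹
        - (Real.log κ * κ⁻¹) * A.indicator p x := by
    funext x
    by_cases hx : x ∈ A
    · rw [hq x, indicator_of_mem hx, indicator_of_mem hx]
      rcases (h0p x).lt_or_eq with h | h
      · rw [Real.log_div (ne_of_gt h) hκne]
        field_simp
      · rw [← h]; simp
    · rw [hq x, indicator_of_notMem hx, indicator_of_notMem hx]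
      simp
  have hqlogInt : Integrable (fun x => q x * Real.log (q x)) := by
    rw [hqlog_eq]
    exact ((hent.indicator hA).mul_const _).sub ((hpInt.indicator hA).const_mul _)
  have hqlogval : (∫ x in A, p x * Real.log (p x))
      = κ * ((∫ x, q x * Real.log (q x)) + Real.log κ) := by
    have := integral_sub ((hent.indicator hA).mul_const (κ⁻¹))
      ((hpInt.indicator hA).const_mul (Real.log κ * κ⁻¹))
    rw [hqlog_eq, this, integral_mul_const, integral_const_mul, integral_indicator hA,
      integral_indicator hA, hmass]
    field_simp
    ring
  exact ⟨hmq, h0q, hqInt, hq1, hx2q, hxq, hqlogInt, hqlogval, hx2qval⟩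

set_option maxHeartbeats 2000000 in
lemma side (p q r : ℝ → ℝ) (A B : Set ℝ) (κ σ aq ar sq sr : ℝ)
    (hmp : Measurable p) (h0p : ∀ x, 0 ≤ p x) (hp1 : ∫ x, p x = 1)
    (hκ0 : 0 < κ) (hκ1 : κ < 1)
    (hσ : 0 < σ) (hvar : ∫ x, x ^ 2 * p x = σ ^ 2)
    (hent : Integrable (fun x => p x * Real.log (p x)) volume)
    (hA : MeasurableSet A) (hB : MeasurableSet B)
    (hunion : A ∪ B = univ) (hdisj : Disjoint A B)
    (hmassA : ∫ x in A, p x = κ) (hmassB : ∫ x in B, p x = 1 - κ)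
    (hq : ∀ x, q x = A.indicator p x / κ)
    (hr : ∀ x, r x = B.indicator p x / (1 - κ))
    (hmeanq : ∫ x, x * q x = aq) (hmeanr : ∫ x, x * r x = ar)
    (hsq0 : 0 ≤ sq) (hvarq : ∫ x, (x - aq) ^ 2 * q x = sq ^ 2)
    (hsr0 : 0 ≤ sr) (hvarr : ∫ x, (x - ar) ^ 2 * r x = sr ^ 2) :
    σ * Real.exp (-(entDist p σ + 4) / κ) < sq := by
  have hκ1' : 0 < 1 - κ := by linarith
  have hπ : (0:ℝ) < Real.pi := Real.pi_pos
  set c : ℝ := Real.sqrt (2 * Real.pi * Real.exp 1) with hc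
  have hcpos : 0 < c := Real.sqrt_pos.mpr (by positivity)
  -- basic integrabilities
  have hpInt : Integrable p := by
    by_contra h
    rw [integral_undef h] at hp1; norm_num at hp1
  have hx2p : Integrable (fun x => x ^ 2 * p x) := by
    by_contra h
    rw [integral_undef h] at hvar
    have : (0:ℝ) < σ ^ 2 := by positivity
    rw [← hvar] at this; norm_num at this
  -- component facts
  obtain ⟨hmq, h0q, hqInt, hq1, hx2q, hxq, hqlogInt, hqlogval, hx2qval⟩ :=
    comp p q A κ hA hκ0 hmp h0p hpInt hx2p hent hmassA hq
  obtain ⟨hmr, h0r, hrInt, hr1, hx2r, hxr, hrlogInt, hrlogval, hx2rval⟩ :=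
    comp p r B (1 - κ) hB hκ1' hmp h0p hpInt hx2p hent hmassB hr
  -- variance expansions
  have hexpand : ∀ (f : ℝ → ℝ) (af : ℝ), (∀ x, 0 ≤ f x) → Integrable f →
      (∫ x, f x) = 1 → Integrable (fun x => x ^ 2 * f x) → Integrable (fun x => x * f x) →
      (∫ x, x * f x) = af →
      Integrable (fun x => (x - af) ^ 2 * f x) ∧
      (∫ x, (x - af) ^ 2 * f x) = (∫ x, x ^ 2 * f x) - af ^ 2 := by
    intro f af h0f hfInt hf1 hx2f hxf hmf
    have heq : (fun x => (x - af) ^ 2 * f x) =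
        fun x => x ^ 2 * f x - (2 * af) * (x * f x) + af ^ 2 * f x := by
      funext x; ring
    have hInt : Integrable (fun x => (x - af) ^ 2 * f x) := by
      rw [heq]; exact (hx2f.sub (hxf.const_mul _)).add (hfInt.const_mul _)
    refine ⟨hInt, ?_⟩
    have i1 : Integrable (fun x => x ^ 2 * f x - 2 * af * (x * f x)) :=
      hx2f.sub (hxf.const_mul _)
    have i2 : Integrable (fun x => af ^ 2 * f x) := hfInt.const_mul _
    have i3 : Integrable (fun x => 2 * af * (x * f x)) := hxf.const_mul _
    rw [heq, integral_add i1 i2, integral_sub hx2f i3, integral_const_mul, integral_const_mul,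
      hmf, hf1]
    ring
  obtain ⟨hvqInt, hvqval⟩ := hexpand q aq h0q hqInt hq1 hx2q hxq hmeanq
  obtain ⟨hvrInt, hvrval⟩ := hexpand r ar h0r hrInt hr1 hx2r hxr hmeanr
  -- positivity of sq, sr
  have hsq : 0 < sq := posVar q aq sq h0q hq1 hvqInt hvarq hsq0
  have hsr : 0 < sr := posVar r ar sr h0r hr1 hvrInt hvarr hsr0
  -- max entropy bounds
  have hIq : -(∫ x, q x * Real.log (q x)) ≤ Real.log (sq * c) :=
    maxEnt q aq sq hsq hmq h0q hqInt hq1 hvqInt hvarq hqlogInt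
  have hIr : -(∫ x, r x * Real.log (r x)) ≤ Real.log (sr * c) :=
    maxEnt r ar sr hsr hmr h0r hrInt hr1 hvrInt hvarr hrlogInt
  set Iq := ∫ x, q x * Real.log (q x)
  set Ir := ∫ x, r x * Real.log (r x)
  set L := ∫ x, p x * Real.log (p x) with hL
  -- variance bound on r: sr² ≤ σ²/(1-κ)
  have hsr2 : sr ^ 2 * (1 - κ) ≤ σ ^ 2 := by
    have h1 : (∫ x in B, x ^ 2 * p x) ≤ σ ^ 2 := by
      rw [← hvar]
      exact setIntegral_le_integral hx2p
        (Filter.Eventually.of_forall fun x => mul_nonneg (sq_nonneg _) (h0p x))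
    have h2 : sr ^ 2 ≤ (1 - κ)⁻¹ * ∫ x in B, x ^ 2 * p x := by
      rw [← hx2rval, ← hvarr, hvrval]
      nlinarith [sq_nonneg ar]
    calc sr ^ 2 * (1 - κ) ≤ ((1 - κ)⁻¹ * ∫ x in B, x ^ 2 * p x) * (1 - κ) := by
          apply mul_le_mul_of_nonneg_right h2 hκ1'.le
      _ = ∫ x in B, x ^ 2 * p x := by field_simp
      _ ≤ σ ^ 2 := h1
  have hsrlog : Real.log sr ≤ Real.log σ - Real.log (1 - κ) / 2 := by
    have h1 : Real.log (sr ^ 2 * (1 - κ)) ≤ Real.log (σ ^ 2) :=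
      Real.log_le_log (by positivity) hsr2
    rw [Real.log_mul (by positivity) (ne_of_gt hκ1'), Real.log_pow, Real.log_pow] at h1
    push_cast at h1
    linarith
  -- entropy decomposition
  have hsplit : L = κ * (Iq + Real.log κ) + (1 - κ) * (Ir + Real.log (1 - κ)) := by
    rw [hL, ← hqlogval, ← hrlogval, ← setIntegral_union hdisj hB
      hent.integrableOn hent.integrableOn, hunion, setIntegral_univ]
  -- log bounds for κ log κ
  have hlogκ : κ * Real.log κ ≥ κ - 1 := by
    have h := Real.log_le_sub_one_of_pos (inv_pos.mpr hκ0)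
    rw [Real.log_inv] at h
    have h2 : Real.log κ ≥ 1 - κ⁻¹ := by linarith
    have := mul_le_mul_of_nonneg_left h2 hκ0.le
    calc κ - 1 = κ * (1 - κ⁻¹) := by field_simp
      _ ≤ κ * Real.log κ := this
  have hlogκ' : (1 - κ) * Real.log (1 - κ) ≥ -κ := by
    have h := Real.log_le_sub_one_of_pos (inv_pos.mpr hκ1')
    rw [Real.log_inv] at h
    have h2 : Real.log (1 - κ) ≥ 1 - (1 - κ)⁻¹ := by linarith
    have := mul_le_mul_of_nonneg_left h2 hκ1'.le
    calc -κ = (1 - κ) * (1 - (1 - κ)⁻¹) := by field_simp; ring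
      _ ≤ (1 - κ) * Real.log (1 - κ) := this
  -- main inequality
  have hlogsqc : Real.log (sq * c) = Real.log sq + Real.log c :=
    Real.log_mul (ne_of_gt hsq) (ne_of_gt hcpos)
  have hlogsrc : Real.log (sr * c) = Real.log sr + Real.log c :=
    Real.log_mul (ne_of_gt hsr) (ne_of_gt hcpos)
  have hD : entDist p σ = Real.log σ + Real.log c + L := by
    rw [entDist, ← hc, ← hL, Real.log_mul (ne_of_gt hσ) (ne_of_gt hcpos)]
  have hmain : κ * Real.log sq > κ * Real.log σ - (entDist p σ + 4) := by
    rw [hD]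
    have h1 : κ * -Iq ≤ κ * Real.log (sq * c) := mul_le_mul_of_nonneg_left hIq hκ0.le
    rw [hlogsqc] at h1
    have h3 : (1 - κ) * -Ir ≤ (1 - κ) * Real.log (sr * c) :=
      mul_le_mul_of_nonneg_left hIr hκ1'.le
    rw [hlogsrc] at h3
    have h4 : (1 - κ) * Real.log sr ≤ (1 - κ) * (Real.log σ - Real.log (1 - κ) / 2) :=
      mul_le_mul_of_nonneg_left hsrlog hκ1'.le
    ring_nf at h1 h3 h4 hsplit hlogκ hlogκ' ⊢
    linarith [h1, h3, h4, hsplit, hlogκ, hlogκ']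
  -- conclude
  have hkey : Real.log σ + -(entDist p σ + 4) / κ < Real.log sq := by
    have h7 : -(entDist p σ + 4) / κ < Real.log sq - Real.log σ := by
      rw [div_lt_iff₀ hκ0]
      ring_nf
      ring_nf at hmain
      linarith
    linarith
  calc σ * Real.exp (-(entDist p σ + 4) / κ)
      = Real.exp (Real.log σ + -(entDist p σ + 4) / κ) := by
        rw [Real.exp_add, Real.exp_log hσ]
    _ < Real.exp (Real.log sq) := Real.exp_lt_exp.mpr hkey
    _ = sq := Real.exp_log hsq

/-- Proposition 5.3: let `X` have mean zero, variance `σ² > 0`, density `p` and finite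
entropy, and let `p = κ p₀ + (1-κ) p₁` be a quantile density decomposition with
`0 < κ < 1`. If `V₀`, `V₁` are random variables with densities `p₀`, `p₁`, means
`a₀`, `a₁` and standard deviations `σ₀`, `σ₁`, then
`σ₀ > σ·e^{-(D(X)+4)/κ}` and `σ₁ > σ·e^{-(D(X)+4)/(1-κ)}`. -/
theorem quantile_decomposition_variance_lower_bound
    (p p₀ p₁ : ℝ → ℝ) (A₀ A₁ : Set ℝ) (κ σ a₀ a₁ σ₀ σ₁ : ℝ)
    (hp : IsProbDensity p)
    (hκ0 : 0 < κ) (hκ1 : κ < 1)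
    (hmean : ∫ x, x * p x = 0)
    (hσ : 0 < σ) (hvar : ∫ x, x ^ 2 * p x = σ ^ 2)
    (hent : Integrable (fun x => p x * Real.log (p x)) volume)
    (hA₀ : MeasurableSet A₀) (hA₁ : MeasurableSet A₁)
    (hunion : A₀ ∪ A₁ = univ) (hdisj : Disjoint A₀ A₁)
    (hord : ∀ x ∈ A₀, ∀ y ∈ A₁, p x ≤ p y)
    (hmass₀ : ∫ x in A₀, p x = κ) (hmass₁ : ∫ x in A₁, p x = 1 - κ)
    (hp₀ : ∀ x, p₀ x = A₀.indicator p x / κ)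
    (hp₁ : ∀ x, p₁ x = A₁.indicator p x / (1 - κ))
    (hmean₀ : ∫ x, x * p₀ x = a₀) (hmean₁ : ∫ x, x * p₁ x = a₁)
    (hσ₀ : 0 ≤ σ₀) (hvar₀ : ∫ x, (x - a₀) ^ 2 * p₀ x = σ₀ ^ 2)
    (hσ₁ : 0 ≤ σ₁) (hvar₁ : ∫ x, (x - a₁) ^ 2 * p₁ x = σ₁ ^ 2) :
    σ * Real.exp (-(entDist p σ + 4) / κ) < σ₀ ∧
    σ * Real.exp (-(entDist p σ + 4) / (1 - κ)) < σ₁ := by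
  obtain ⟨hmp, h0p, hp1⟩ := hp
  constructor
  · exact side p p₀ p₁ A₀ A₁ κ σ a₀ a₁ σ₀ σ₁ hmp h0p hp1 hκ0 hκ1 hσ hvar hent hA₀ hA₁
      hunion hdisj hmass₀ hmass₁ hp₀ hp₁ hmean₀ hmean₁ hσ₀ hvar₀ hσ₁ hvar₁
  · have h1 : (0:ℝ) < 1 - κ := by linarith
    have h2 : 1 - κ < 1 := by linarith
    have e : 1 - (1 - κ) = κ := by ring
    exact side p p₁ p₀ A₁ A₀ (1 - κ) σ a₁ a₀ σ₁ σ₀ hmp h0p hp1 h1 h2 hσ hvar hent hA₁ hA₀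
      (by rw [union_comm]; exact hunion) hdisj.symm hmass₁ (by rw [e]; exact hmass₀) hp₁
      (fun x => by rw [e]; exact hp₀ x) hmean₁ hmean₀ hσ₁ hvar₁ hσ₀ hvar₀
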